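/- The fixed points of the Fibonacci entry point function z are exactly the numbers of the form 5^f and 12·5^f for f ≥ 0, together with the convention for n = 1 (z(1) = 1 = 5^0). -/

import Mathlib

/-- The Fibonacci entry point: least positive `m` with `n ∣ Nat.fib m`. -/
noncomputable def fibEntry (n : ℕ) : ℕ := sInf {m | 0 < m ∧ n ∣ Nat.fib m}

section Basics

lemma fib_mod_descend (n d : ℕ) :
    ∀ i, ((Nat.fib (i+d) : ZMod n) = Nat.fib i ∧ (Nat.fib (i+1+d) : ZMod n) = Nat.fib (i+1)) →
      (Nat.fib d : ZMod n) = Nat.fib 0 ∧ (Nat.fib (1+d) : ZMod n) = Nat.fib 1 := by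
  intro i
  induction i with
  | zero => simp
  | succ k ih =>
      rintro ⟨h1, h2⟩
      apply ih
      have e1 : (Nat.fib (k+2) : ZMod n) = Nat.fib k + Nat.fib (k+1) := by
        rw [Nat.fib_add_two]; push_cast; ring
      have e2 : (Nat.fib (k+d+2) : ZMod n) = Nat.fib (k+d) + Nat.fib (k+d+1) := by
        rw [Nat.fib_add_two]; push_cast; ring
      have h1' : (Nat.fib (k+d+1) : ZMod n) = Nat.fib (k+1) := by
        rw [show k+d+1 = k+1+d by ring]; exact h1
      have h2' : (Nat.fib (k+d+2) : ZMod n) = Nat.fib (k+2) := by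
        rw [show k+d+2 = k+1+1+d by ring]; exact h2
      constructor
      · linear_combination h2' + e1 - e2 - h1'
      · exact h1

lemma exists_fib_dvd (n : ℕ) (hn : 0 < n) : ∃ m, 0 < m ∧ n ∣ Nat.fib m := by
  haveI : NeZero n := ⟨hn.ne'⟩
  obtain ⟨i, j, hne, hij⟩ := Finite.exists_ne_map_eq_of_infinite
    (fun k : ℕ => ((Nat.fib k : ZMod n), (Nat.fib (k+1) : ZMod n)))
  wlog hlt : i < j generalizing i j
  · exact this j i hne.symm hij.symm (by omega)
  set d := j - i with hd
  have hdpos : 0 < d := by omega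
  have hj : j = i + d := by omega
  have hij1 : (Nat.fib j : ZMod n) = Nat.fib i := (congrArg Prod.fst hij).symm
  have hij2 : (Nat.fib (j+1) : ZMod n) = Nat.fib (i+1) := (congrArg Prod.snd hij).symm
  have h := fib_mod_descend n d i ⟨by rw [show i+d = j by omega]; exact hij1,
    by rw [show i+1+d = j+1 by omega]; exact hij2⟩
  refine ⟨d, hdpos, ?_⟩
  have : (Nat.fib d : ZMod n) = 0 := by simpa using h.1
  exact (ZMod.natCast_eq_zero_iff _ _).mp this

lemma fibEntry_mem (n : ℕ) (hn : 0 < n) : 0 < fibEntry n ∧ n ∣ Nat.fib (fibEntry n) :=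
  Nat.sInf_mem (exists_fib_dvd n hn)

lemma fibEntry_pos (n : ℕ) (hn : 0 < n) : 0 < fibEntry n := (fibEntry_mem n hn).1

lemma dvd_fib_fibEntry (n : ℕ) (hn : 0 < n) : n ∣ Nat.fib (fibEntry n) := (fibEntry_mem n hn).2

lemma fibEntry_le (n m : ℕ) (hm : 0 < m) (h : n ∣ Nat.fib m) : fibEntry n ≤ m :=
  Nat.sInf_le ⟨hm, h⟩

/-- Main characterization: `n ∣ fib m ↔ fibEntry n ∣ m`. -/
lemma fibEntry_dvd_iff (n m : ℕ) (hn : 0 < n) : n ∣ Nat.fib m ↔ fibEntry n ∣ m := by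
  constructor
  · intro h
    rcases Nat.eq_zero_or_pos m with rfl | hm
    · exact dvd_zero _
    · set z := fibEntry n with hz
      have hzpos : 0 < z := fibEntry_pos n hn
      have hg : n ∣ Nat.fib (Nat.gcd z m) := by
        rw [Nat.fib_gcd]
        exact Nat.dvd_gcd (dvd_fib_fibEntry n hn) h
      have hgpos : 0 < Nat.gcd z m := Nat.gcd_pos_of_pos_left m hzpos
      have hle : z ≤ Nat.gcd z m := fibEntry_le n _ hgpos hg
      have hge : Nat.gcd z m ≤ z := Nat.le_of_dvd hzpos (Nat.gcd_dvd_left z m)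
      have : Nat.gcd z m = z := le_antisymm hge hle
      rw [← this]; exact Nat.gcd_dvd_right z m
  · intro h
    exact dvd_trans (dvd_fib_fibEntry n hn) (Nat.fib_dvd _ _ h)

lemma fibEntry_dvd_of_dvd {a b : ℕ} (ha : 0 < a) (hb : 0 < b) (h : a ∣ b) :
    fibEntry a ∣ fibEntry b := by
  rw [← fibEntry_dvd_iff a _ ha]
  exact h.trans (dvd_fib_fibEntry b hb)

lemma fibEntry_lcm (a b : ℕ) (ha : 0 < a) (hb : 0 < b) :
    fibEntry (Nat.lcm a b) = Nat.lcm (fibEntry a) (fibEntry b) := by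
  have hl : 0 < Nat.lcm a b := Nat.pos_of_ne_zero (Nat.lcm_ne_zero ha.ne' hb.ne')
  apply Nat.dvd_antisymm
  · rw [← fibEntry_dvd_iff _ _ hl]
    refine Nat.lcm_dvd ?_ ?_
    · rw [fibEntry_dvd_iff a _ ha]; exact Nat.dvd_lcm_left _ _
    · rw [fibEntry_dvd_iff b _ hb]; exact Nat.dvd_lcm_right _ _
  · refine Nat.lcm_dvd ?_ ?_
    · exact fibEntry_dvd_of_dvd ha hl (Nat.dvd_lcm_left a b)
    · exact fibEntry_dvd_of_dvd hb hl (Nat.dvd_lcm_right a b)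

lemma fibEntry_mul_coprime (a b : ℕ) (ha : 0 < a) (hb : 0 < b) (h : Nat.Coprime a b) :
    fibEntry (a * b) = Nat.lcm (fibEntry a) (fibEntry b) := by
  rw [← h.lcm_eq_mul, fibEntry_lcm a b ha hb]

lemma fibEntry_eq_of (n k : ℕ) (hk : 0 < k) (h1 : n ∣ Nat.fib k)
    (h2 : ∀ m < k, 0 < m → ¬ n ∣ Nat.fib m) : fibEntry n = k := by
  have hn : 0 < n := by
    rcases Nat.eq_zero_or_pos n with rfl | h
    · exfalso
      rcases h1 with ⟨c, hc⟩
      simp at hc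
      have : 0 < Nat.fib k := Nat.fib_pos.mpr hk
      omega
    · exact h
  have hle := fibEntry_le n k hk h1
  have hpos := fibEntry_pos n hn
  by_contra hne
  exact h2 _ (lt_of_le_of_ne hle hne) hpos (dvd_fib_fibEntry n hn)

lemma fibEntry_one : fibEntry 1 = 1 := fibEntry_eq_of 1 1 one_pos (one_dvd _) (by omega)
lemma fibEntry_two : fibEntry 2 = 3 := fibEntry_eq_of 2 3 (by norm_num) (by decide) (by decide)
lemma fibEntry_three : fibEntry 3 = 4 := fibEntry_eq_of 3 4 (by norm_num) (by decide) (by decide)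
lemma fibEntry_four : fibEntry 4 = 6 := fibEntry_eq_of 4 6 (by norm_num) (by decide) (by decide)
lemma fibEntry_five : fibEntry 5 = 5 := fibEntry_eq_of 5 5 (by norm_num) (by decide) (by decide)

end Basics

section Cong

-- key congruence: x_k = fib(k(m+1)) satisfies, mod fib(m+1)^3:
-- x_{k+1} ≡ (k+1) a s^k + C(k+1,2) a² s^{k-1},  y_{k+1} ≡ s^{k+1} + (k+1) a s^k + 2C(k+1,2) a² s^{k-1}
lemma fib_mul_mod (m : ℕ) : ∀ k : ℕ,
    ((Nat.fib ((k+1)*(m+1)) : ZMod (Nat.fib (m+1)^3)) =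
      (k+1) * (Nat.fib (m+1) : ZMod (Nat.fib (m+1)^3)) * (Nat.fib m : ZMod (Nat.fib (m+1)^3))^k
        + (Nat.choose (k+1) 2) * (Nat.fib (m+1) : ZMod (Nat.fib (m+1)^3))^2 * (Nat.fib m : ZMod (Nat.fib (m+1)^3))^(k-1))
    ∧ ((Nat.fib ((k+1)*(m+1)+1) : ZMod (Nat.fib (m+1)^3)) =
      (Nat.fib m : ZMod (Nat.fib (m+1)^3))^(k+1)
        + (k+1) * (Nat.fib (m+1) : ZMod (Nat.fib (m+1)^3)) * (Nat.fib m : ZMod (Nat.fib (m+1)^3))^k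
        + 2 * (Nat.choose (k+1) 2) * (Nat.fib (m+1) : ZMod (Nat.fib (m+1)^3))^2 * (Nat.fib m : ZMod (Nat.fib (m+1)^3))^(k-1)) := by
  set N := Nat.fib (m+1)^3 with hN
  set a : ZMod N := (Nat.fib (m+1) : ZMod N) with ha
  set s : ZMod N := (Nat.fib m : ZMod N) with hs
  have h3 : a^3 = 0 := by
    rw [ha, ← Nat.cast_pow, ← hN, ZMod.natCast_self]
  have hrecx : ∀ u : ℕ, (Nat.fib (u + (m+1)) : ZMod N) = (Nat.fib u : ZMod N) * s + (Nat.fib (u+1) : ZMod N) * a := by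
    intro u
    have := Nat.fib_add u m
    rw [show u + (m+1) = u + m + 1 by ring, this]
    push_cast; ring
  have hrecy : ∀ u : ℕ, (Nat.fib (u + (m+1) + 1) : ZMod N) = (Nat.fib u : ZMod N) * a + (Nat.fib (u+1) : ZMod N) * (s + a) := by
    intro u
    have := Nat.fib_add u (m+1)
    rw [this]
    have h2 : (Nat.fib (m+1+1) : ZMod N) = s + a := by
      rw [Nat.fib_add_two]; push_cast; ring
    push_cast
    push_cast at h2
    rw [h2]
  intro k
  induction k with
  | zero =>
      constructor
      · simp [ha]
      · have : Nat.fib (1*(m+1)+1) = Nat.fib m + Nat.fib (m+1) := by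
          rw [one_mul, Nat.fib_add_two]
        rw [this]; push_cast; simp [ha, hs]
  | succ k ih =>
      obtain ⟨ihx, ihy⟩ := ih
      have hux : (Nat.fib ((k+2)*(m+1)) : ZMod N)
          = (Nat.fib ((k+1)*(m+1)) : ZMod N) * s + (Nat.fib ((k+1)*(m+1)+1) : ZMod N) * a := by
        rw [show (k+2)*(m+1) = (k+1)*(m+1) + (m+1) by ring]
        exact hrecx _
      have huy : (Nat.fib ((k+2)*(m+1)+1) : ZMod N)
          = (Nat.fib ((k+1)*(m+1)) : ZMod N) * a + (Nat.fib ((k+1)*(m+1)+1) : ZMod N) * (s + a) := by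
        rw [show (k+2)*(m+1)+1 = (k+1)*(m+1) + (m+1) + 1 by ring]
        exact hrecy _
      have hCn : Nat.choose (k+2) 2 = Nat.choose (k+1) 2 + (k+1) := by
        have h : (k+2).choose 2 = (k+1).choose 1 + (k+1).choose 2 := Nat.choose_succ_succ (k+1) 1
        rw [Nat.choose_one_right] at h
        omega
      have hC : ((Nat.choose (k+2) 2 : ℕ) : ZMod N) = ((Nat.choose (k+1) 2 : ℕ) : ZMod N) + (k+1) := by
        rw [hCn]; push_cast; ring
      rcases k with _ | j
      · constructor
        · rw [hux, ihx, ihy]; norm_num [Nat.choose]; ring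
        · rw [huy, ihx, ihy]; norm_num [Nat.choose]; ring
      · simp only [Nat.succ_sub_one] at ihx ihy ⊢
        constructor
        · rw [hux, ihx, ihy, hC]
          push_cast
          linear_combination (2*((Nat.choose (j+2) 2 : ℕ) : ZMod N) * s^j) * h3
        · rw [huy, ihx, ihy, hC]
          push_cast
          linear_combination (3*((Nat.choose (j+2) 2 : ℕ) : ZMod N) * s^j) * h3

end Cong

section Lift

/-- Lifting the exponent: if `q^(i+1) ∣ fib m` then `q^(i+2) ∣ fib (q*m)`. -/
lemma pow_succ_dvd_fib_mul (q i m : ℕ) (hq : 2 ≤ q) (hm : 0 < m)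
    (h : q^(i+1) ∣ Nat.fib m) : q^(i+2) ∣ Nat.fib (q*m) := by
  obtain ⟨m', rfl⟩ : ∃ m', m = m' + 1 := ⟨m - 1, by omega⟩
  obtain ⟨k, rfl⟩ : ∃ k, q = k + 2 := ⟨q - 2, by omega⟩
  obtain ⟨u, hu⟩ := h
  have hdvd : (k+2)^(i+2) ∣ (Nat.fib (m'+1))^3 := by
    rw [hu]
    calc (k+2)^(i+2) ∣ (k+2)^(3*(i+1)) := pow_dvd_pow _ (by omega)
    _ = ((k+2)^(i+1))^3 := by rw [← pow_mul]; ring_nf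
    _ ∣ ((k+2)^(i+1)*u)^3 := pow_dvd_pow_of_dvd (dvd_mul_right _ _) 3
  haveI : NeZero ((k+2)^(i+2)) := ⟨pow_ne_zero _ (by omega)⟩
  have E := (fib_mul_mod m' (k+1)).1
  have E2 := congrArg (ZMod.castHom hdvd (ZMod ((k+2)^(i+2)))) E
  simp only [map_add, map_mul, map_pow, map_natCast, map_one, map_ofNat, Nat.add_sub_cancel,
    ZMod.castHom_apply] at E2
  rw [← ZMod.natCast_eq_zero_iff]
  rw [show (k+1+1)*(m'+1) = (k+2)*(m'+1) from rfl] at E2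
  rw [E2, hu]
  have h0 : (((k+2) : ZMod ((k+2)^(i+2))))^(i+2) = 0 := by
    rw [show (((k+2) : ZMod ((k+2)^(i+2))))^(i+2) = (((k+2)^(i+2) : ℕ) : ZMod ((k+2)^(i+2))) by push_cast; ring,
      ZMod.natCast_self]
  push_cast
  linear_combination ((u : ZMod ((k+2)^(i+2))) * ((Nat.fib m' : ZMod ((k+2)^(i+2))))^(k+1)
      + ((k+1+1).choose 2 : ZMod ((k+2)^(i+2))) * ((k+2) : ZMod ((k+2)^(i+2)))^i * (u:ZMod ((k+2)^(i+2)))^2 * ((Nat.fib m' : ZMod ((k+2)^(i+2))))^k) * h0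

end Lift

section Frob

def imHom : ℤ√5 →+ ℤ where
  toFun := Zsqrtd.im
  map_zero' := rfl
  map_add' := fun a b => Zsqrtd.im_add a b

lemma one_add_sqrtd_pow (n : ℕ) : ((1 + Zsqrtd.sqrtd : ℤ√5))^(n+1) =
    ⟨2^(n+1)*(Nat.fib (n+2) : ℤ) - 2^n*(Nat.fib (n+1) : ℤ), 2^n*(Nat.fib (n+1) : ℤ)⟩ := by
  induction n with
  | zero =>
      rw [pow_one]
      refine Zsqrtd.ext_iff.mpr ⟨?_, ?_⟩ <;> simp [Nat.fib_one, Nat.fib_two]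
  | succ k ih =>
      rw [pow_succ, ih]
      have hf : (Nat.fib (k+3) : ℤ) = Nat.fib (k+1) + Nat.fib (k+2) := by
        rw [show k+3 = (k+1)+2 by ring, Nat.fib_add_two]; push_cast; ring
      refine Zsqrtd.ext_iff.mpr ⟨?_, ?_⟩
      · simp only [Zsqrtd.re_mul, Zsqrtd.im_mul, Zsqrtd.re_add, Zsqrtd.im_add,
          Zsqrtd.re_one, Zsqrtd.im_one, show (Zsqrtd.sqrtd : ℤ√5).re = 0 from rfl,
          show (Zsqrtd.sqrtd : ℤ√5).im = 1 from rfl, show k+1+1 = k+2 from rfl,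
          show k+1+2 = k+3 from rfl]
        rw [hf]; ring
      · simp only [Zsqrtd.re_mul, Zsqrtd.im_mul, Zsqrtd.re_add, Zsqrtd.im_add,
          Zsqrtd.re_one, Zsqrtd.im_one, show (Zsqrtd.sqrtd : ℤ√5).re = 0 from rfl,
          show (Zsqrtd.sqrtd : ℤ√5).im = 1 from rfl, show k+1+1 = k+2 from rfl,
          show k+1+2 = k+3 from rfl]
        ring

lemma sqrtd_sq : (Zsqrtd.sqrtd : ℤ√5)^2 = ((5 : ℤ) : ℤ√5) := by
  refine Zsqrtd.ext_iff.mpr ⟨?_, ?_⟩ <;> simp [pow_two, Zsqrtd.re_mul, Zsqrtd.im_mul]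

lemma im_sqrtd_pow (k : ℕ) : ((Zsqrtd.sqrtd : ℤ√5)^k).im = if k % 2 = 1 then 5^(k/2) else 0 := by
  rcases Nat.even_or_odd k with ⟨t, ht⟩ | ⟨t, ht⟩
  · subst ht
    rw [show t + t = 2*t by ring, pow_mul, sqrtd_sq, ← Int.cast_pow]
    have hm : (2*t) % 2 = 0 := by omega
    rw [if_neg (by omega)]
    exact Zsqrtd.im_intCast _
  · subst ht
    rw [pow_succ, pow_mul, sqrtd_sq, ← Int.cast_pow]
    have ht2 : (2*t+1)/2 = t := by omega
    rw [if_pos (by omega), Zsqrtd.im_mul, ht2, Zsqrtd.im_intCast, Zsqrtd.re_intCast,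
      show (Zsqrtd.sqrtd : ℤ√5).im = 1 from rfl]
    push_cast
    ring

lemma fermat_fib (p : ℕ) (hp : p.Prime) (hodd : p % 2 = 1) :
    (p:ℤ) ∣ 2^(p-1) * (Nat.fib p : ℤ) - 5^((p-1)/2) := by
  obtain ⟨n, rfl⟩ : ∃ n, p = n + 1 := ⟨p - 1, by omega⟩
  have h1 := one_add_sqrtd_pow n
  have h2 : ((1 + Zsqrtd.sqrtd : ℤ√5))^(n+1)
      = ∑ k ∈ Finset.range (n+2), (Zsqrtd.sqrtd : ℤ√5)^k * 1^(n+1-k) * ((n+1).choose k : ℤ√5) := by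
    rw [add_comm (1 : ℤ√5) Zsqrtd.sqrtd, add_pow]
  have h3 : (2:ℤ)^n * (Nat.fib (n+1) : ℤ)
      = ∑ k ∈ Finset.range (n+2), (if k % 2 = 1 then (5:ℤ)^(k/2) else 0) * ((n+1).choose k : ℤ) := by
    have := congrArg imHom (h1.symm.trans h2)
    simp only [map_sum] at this
    have hL : imHom (⟨2^(n+1)*(Nat.fib (n+2) : ℤ) - 2^n*(Nat.fib (n+1) : ℤ), 2^n*(Nat.fib (n+1) : ℤ)⟩ : ℤ√5)
        = 2^n*(Nat.fib (n+1) : ℤ) := rfl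
    rw [hL] at this
    rw [this]
    refine Finset.sum_congr rfl ?_
    intro k _
    show ((Zsqrtd.sqrtd : ℤ√5)^k * 1^(n+1-k) * ((n+1).choose k : ℤ√5)).im = _
    rw [one_pow, mul_one]
    rw [show (((n+1).choose k : ℕ) : ℤ√5) = (((n+1).choose k : ℤ) : ℤ√5) by push_cast; rfl]
    rw [Zsqrtd.im_mul]
    simp [im_sqrtd_pow]
  rw [show (n + 1) - 1 = n by omega]
  rw [h3, Finset.sum_range_succ]
  have hlast : (if (n+1) % 2 = 1 then (5:ℤ)^((n+1)/2) else 0) * ((n+1).choose (n+1) : ℤ)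
      = 5^(n/2) := by
    rw [Nat.choose_self]
    simp only [hodd]
    rw [show (n+1)/2 = n/2 by omega]
    simp
  rw [hlast]
  simp only [add_sub_cancel_right]
  apply Finset.dvd_sum
  intro k hk
  rcases Nat.eq_zero_or_pos k with rfl | hkpos
  · simp
  · have : (n+1) ∣ (n+1).choose k := hp.dvd_choose_self (by omega) (Finset.mem_range.mp hk)
    exact Dvd.dvd.mul_left (Int.natCast_dvd_natCast.mpr this) _

lemma cassini : ∀ n : ℕ, (Nat.fib (n+2) : ℤ) * Nat.fib n = (Nat.fib (n+1))^2 + (-1)^(n+1) := by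
  intro n
  induction n with
  | zero => simp [Nat.fib_one, Nat.fib_two]
  | succ k ih =>
      have h1 : (Nat.fib (k+3) : ℤ) = Nat.fib (k+1) + Nat.fib (k+2) := by
        rw [show k+3 = (k+1)+2 by ring, Nat.fib_add_two]; push_cast; ring
      have h2 : (Nat.fib (k+2) : ℤ) = Nat.fib k + Nat.fib (k+1) := by
        rw [Nat.fib_add_two]; push_cast; ring
      rw [show k+1+2 = k+3 from rfl, h1]
      rw [show k+1+1 = k+2 from rfl]
      have : (-1 : ℤ)^(k+2) = -(-1)^(k+1) := by ring
      rw [this]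
      nlinarith [ih, h2]

lemma prime_dvd_fib_pm (p : ℕ) (hp : p.Prime) (h7 : 7 ≤ p) :
    p ∣ Nat.fib (p-1) ∨ p ∣ Nat.fib (p+1) := by
  haveI : Fact p.Prime := ⟨hp⟩
  have hodd : p % 2 = 1 := Nat.odd_iff.mp (hp.odd_of_ne_two (by omega))
  have hF := fermat_fib p hp hodd
  have h2 : (((2:ℤ)^(p-1) * (Nat.fib p : ℤ) - 5^((p-1)/2) : ℤ) : ZMod p) = 0 :=
    (ZMod.intCast_zmod_eq_zero_iff_dvd _ _).mpr hF
  push_cast at h2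
  have h2ne : (2 : ZMod p) ≠ 0 := by
    have : ((2:ℕ) : ZMod p) ≠ 0 := by
      rw [Ne, ZMod.natCast_eq_zero_iff]
      intro hd
      exact absurd (Nat.le_of_dvd (by norm_num) hd) (by omega)
    simpa using this
  have h5ne : (5 : ZMod p) ≠ 0 := by
    have : ((5:ℕ) : ZMod p) ≠ 0 := by
      rw [Ne, ZMod.natCast_eq_zero_iff]
      intro hd
      exact absurd (Nat.le_of_dvd (by norm_num) hd) (by omega)
    simpa using this
  have e1 : (2 : ZMod p)^(p-1) = 1 := ZMod.pow_card_sub_one_eq_one h2ne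
  have e5 : (5 : ZMod p)^(p-1) = 1 := ZMod.pow_card_sub_one_eq_one h5ne
  have hfib : ((Nat.fib p : ℕ) : ZMod p) = (5 : ZMod p)^((p-1)/2) := by
    have : (2:ZMod p)^(p-1) * (Nat.fib p : ZMod p) = 5^((p-1)/2) := by linear_combination h2
    rwa [e1, one_mul] at this
  have hsq : ((Nat.fib p : ℕ) : ZMod p)^2 = 1 := by
    rw [hfib, ← pow_mul, show (p-1)/2*2 = p-1 by omega, e5]
  have hdvd : (p:ℤ) ∣ (Nat.fib p : ℤ)^2 - 1 := by
    rw [← ZMod.intCast_zmod_eq_zero_iff_dvd]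
    push_cast
    linear_combination hsq
  obtain ⟨n, rfl⟩ : ∃ n, p = n + 1 := ⟨p - 1, by omega⟩
  have hc := cassini n
  have hneg : ((-1:ℤ))^(n+1) = -1 := Odd.neg_one_pow (Nat.odd_iff.mpr hodd)
  rw [hneg] at hc
  have hprod : ((n+1:ℕ):ℤ) ∣ (Nat.fib (n+2) : ℤ) * Nat.fib n := by
    rw [hc]
    have : ((Nat.fib (n+1):ℤ))^2 + -1 = (Nat.fib (n+1) : ℤ)^2 - 1 := by ring
    rw [this]
    exact_mod_cast hdvd
  have hnat : (n+1) ∣ Nat.fib (n+2) * Nat.fib n := by exact_mod_cast hprod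
  rcases (Nat.Prime.dvd_mul hp).mp hnat with h | h
  · right
    simpa using h
  · left
    simpa using h

end Frob

section Five

lemma five_exact (i m : ℕ) (hm : 0 < m) (h1 : 5^(i+1) ∣ Nat.fib m)
    (h2 : ¬ 5^(i+2) ∣ Nat.fib m) :
    5^(i+2) ∣ Nat.fib (5*m) ∧ ¬ 5^(i+3) ∣ Nat.fib (5*m) := by
  refine ⟨pow_succ_dvd_fib_mul 5 i m (by norm_num) hm h1, ?_⟩
  intro hdd
  obtain ⟨m', rfl⟩ : ∃ m', m = m' + 1 := ⟨m - 1, by omega⟩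
  obtain ⟨u, hu⟩ := h1
  have hdvd : 5^(i+3) ∣ (Nat.fib (m'+1))^3 := by
    rw [hu]
    calc (5:ℕ)^(i+3) ∣ 5^(3*(i+1)) := pow_dvd_pow _ (by omega)
    _ = (5^(i+1))^3 := by rw [← pow_mul]; ring_nf
    _ ∣ (5^(i+1)*u)^3 := pow_dvd_pow_of_dvd (dvd_mul_right _ _) 3
  haveI : NeZero ((5:ℕ)^(i+3)) := ⟨pow_ne_zero _ (by norm_num)⟩
  have E := (fib_mul_mod m' 4).1
  have E2 := congrArg (ZMod.castHom hdvd (ZMod (5^(i+3)))) E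
  simp only [map_add, map_mul, map_pow, map_natCast, map_one, map_ofNat, Nat.add_sub_cancel,
    ZMod.castHom_apply] at E2
  rw [show (4+1)*(m'+1) = 5*(m'+1) from rfl] at E2
  rw [show Nat.choose (4+1) 2 = 10 by decide] at E2
  have hz : ((Nat.fib (5*(m'+1)) : ℕ) : ZMod (5^(i+3))) = 0 :=
    (ZMod.natCast_eq_zero_iff _ _).mpr hdd
  set w : ℕ := u * (Nat.fib m')^4 + 2 * 5^(i+1) * u^2 * (Nat.fib m')^3 with hw
  have key : ((5^(i+2) * w : ℕ) : ZMod (5^(i+3))) = 0 := by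
    rw [← hz, E2, hu, hw]
    push_cast
    ring
  have hdvd2 : (5:ℕ)^(i+3) ∣ 5^(i+2) * w := (ZMod.natCast_eq_zero_iff _ _).mp key
  have h5w : (5:ℕ) ∣ w := by
    have : (5:ℕ)^(i+2) * 5 ∣ 5^(i+2) * w := by
      rwa [show (5:ℕ)^(i+2)*5 = 5^(i+3) by ring]
    exact (mul_dvd_mul_iff_left (a := (5:ℕ)^(i+2)) (by positivity)).mp this
  have h5us : (5:ℕ) ∣ u * (Nat.fib m')^4 := by
    have hx : (5:ℕ) ∣ 2 * 5^(i+1) * u^2 * (Nat.fib m')^3 := ⟨2*5^i*u^2*(Nat.fib m')^3, by ring⟩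
    have := Nat.dvd_sub h5w hx
    simpa [hw] using this
  have h5 : Nat.Prime 5 := by norm_num
  rcases (Nat.Prime.dvd_mul h5).mp h5us with h5u | h5s
  · apply h2
    obtain ⟨u', rfl⟩ := h5u
    rw [hu]
    exact ⟨u', by ring⟩
  · have hs : (5:ℕ) ∣ Nat.fib m' := h5.dvd_of_dvd_pow h5s
    have hf : (5:ℕ) ∣ Nat.fib (m'+1) := by
      rw [hu]
      exact dvd_mul_of_dvd_left (dvd_pow_self 5 (Nat.succ_ne_zero i)) u
    have hco := Nat.fib_coprime_fib_succ m'
    have : (5:ℕ) ∣ 1 := hco ▸ Nat.dvd_gcd hs hf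
    norm_num at this

lemma fibEntry_five_pow : ∀ c, fibEntry (5^c) = 5^c ∧ ¬ 5^(c+1) ∣ Nat.fib (5^c) := by
  intro c
  induction c with
  | zero => exact ⟨by simpa using fibEntry_one, by decide⟩
  | succ c ih =>
      rcases Nat.eq_zero_or_pos c with rfl | hc
      · exact ⟨by simpa using fibEntry_five, by decide⟩
      obtain ⟨c', rfl⟩ : ∃ c', c = c' + 1 := ⟨c - 1, by omega⟩
      obtain ⟨ihz, ihd⟩ := ih
      have hpos : 0 < (5:ℕ)^(c'+1) := by positivity
      have hpos2 : 0 < (5:ℕ)^(c'+2) := by positivity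
      have d1 : 5^(c'+1) ∣ Nat.fib (5^(c'+1)) := by
        have := dvd_fib_fibEntry (5^(c'+1)) hpos
        rwa [ihz] at this
      have hfe := five_exact c' (5^(c'+1)) hpos d1 ihd
      rw [show 5*5^(c'+1) = 5^(c'+2) by rw [← pow_succ']] at hfe
      obtain ⟨A, B⟩ := hfe
      refine ⟨?_, by simpa [show c'+1+1+1 = c'+3 by omega] using B⟩
      have hdvd1 : fibEntry (5^(c'+2)) ∣ 5^(c'+2) := (fibEntry_dvd_iff _ _ hpos2).mp A
      have hdvd2 : (5:ℕ)^(c'+1) ∣ fibEntry (5^(c'+2)) := by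
        have := fibEntry_dvd_of_dvd hpos hpos2 (pow_dvd_pow 5 (by omega))
        rwa [ihz] at this
      have h5 : Nat.Prime 5 := by norm_num
      obtain ⟨j, hj, hzj⟩ := (Nat.dvd_prime_pow h5).mp hdvd1
      have hcj : c' + 1 ≤ j := by
        rw [hzj] at hdvd2
        exact (Nat.pow_dvd_pow_iff_le_right (by norm_num)).mp hdvd2
      rcases Nat.lt_or_ge j (c'+2) with hlt | hge
      · exfalso
        have : j = c' + 1 := by omega
        subst this
        apply ihd
        have := dvd_fib_fibEntry (5^(c'+2)) hpos2
        rw [hzj] at this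
        exact dvd_trans (pow_dvd_pow 5 (by omega)) this
      · have : j = c' + 2 := by omega
        rw [hzj, this]

lemma fibEntry_prime_pow_dvd (q : ℕ) (hq : q.Prime) : ∀ j, fibEntry (q^(j+1)) ∣ q^j * fibEntry q := by
  intro j
  induction j with
  | zero => simpa using dvd_refl _
  | succ j ih =>
      have hqpos : 0 < q := hq.pos
      have hzq : 0 < fibEntry q := fibEntry_pos q hqpos
      have hT : 0 < q^j * fibEntry q := by positivity
      have hppos : 0 < q^(j+1) := by positivity
      have hfib : q^(j+1) ∣ Nat.fib (q^j * fibEntry q) := (fibEntry_dvd_iff _ _ hppos).mpr ih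
      have step := pow_succ_dvd_fib_mul q j _ hq.two_le hT hfib
      have : q^(j+2) ∣ Nat.fib (q^(j+1) * fibEntry q) := by
        rwa [show q^(j+1) * fibEntry q = q*(q^j*fibEntry q) by ring]
      exact (fibEntry_dvd_iff _ _ (by positivity)).mp this

end Five

section Main

lemma prime_pow_dvd_lcm {p k x y : ℕ} (hp : p.Prime) (hx : x ≠ 0) (hy : y ≠ 0) :
    p^k ∣ Nat.lcm x y ↔ p^k ∣ x ∨ p^k ∣ y := by
  rw [hp.pow_dvd_iff_le_factorization (Nat.lcm_ne_zero hx hy),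
    hp.pow_dvd_iff_le_factorization hx, hp.pow_dvd_iff_le_factorization hy,
    Nat.factorization_lcm hx hy, Finsupp.sup_apply]
  exact le_sup_iff

/-- entry point of a prime `p ∤ 10` divides `p-1` or `p+1`; in particular `p ∤ fibEntry p`. -/
lemma fibEntry_prime_le (p : ℕ) (hp : p.Prime) (h7 : 7 ≤ p) :
    (fibEntry p ∣ p - 1 ∨ fibEntry p ∣ p + 1) := by
  rcases prime_dvd_fib_pm p hp h7 with h | h
  · exact Or.inl ((fibEntry_dvd_iff p _ hp.pos).mp h)
  · exact Or.inr ((fibEntry_dvd_iff p _ hp.pos).mp h)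

lemma not_p_dvd_fibEntry (p : ℕ) (hp : p.Prime) (h7 : 7 ≤ p) : ¬ p ∣ fibEntry p := by
  intro hd
  rcases fibEntry_prime_le p hp h7 with h | h
  · have := Nat.le_of_dvd (by omega) (hd.trans h)
    omega
  · have h1 : p ∣ p + 1 := hd.trans h
    have : p ∣ 1 := (Nat.dvd_add_right (dvd_refl p)).mp h1
    have := Nat.le_of_dvd one_pos this
    have := hp.two_le
    omega

/-- Key decomposition lemma: a prime power dividing `fibEntry n` comes from a prime power in `n`. -/
lemma fibEntry_prime_pow_source : ∀ n, 0 < n → ∀ p k, p.Prime → 1 ≤ k → p^k ∣ fibEntry n →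
    ∃ q j, q.Prime ∧ 1 ≤ j ∧ q^j ∣ n ∧ p^k ∣ q^(j-1) * fibEntry q := by
  intro n
  induction n using Nat.strong_induction_on with
  | _ n IH =>
    intro hn p k hp hk hdvd
    rcases eq_or_lt_of_le (Nat.succ_le_of_lt hn) with h1 | h2
    · exfalso
      rw [show n = 1 by omega, fibEntry_one] at hdvd
      have := Nat.le_of_dvd one_pos hdvd
      have := hp.two_le
      have : 2 ≤ p^k := le_trans hp.two_le (Nat.le_self_pow (by omega) p)
      omega
    · -- n ≥ 2
      set q0 := n.minFac with hq0
      have hq0p : q0.Prime := Nat.minFac_prime (by omega)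
      have hn0 : n ≠ 0 := by omega
      set j := n.factorization q0 with hj
      have hjpos : 0 < j := hq0p.factorization_pos_of_dvd hn0 (Nat.minFac_dvd n)
      set m := n / q0^j with hm
      have hsplit : q0^j * m = n := Nat.ordProj_mul_ordCompl_eq_self n q0
      have hmpos : 0 < m := Nat.ordCompl_pos q0 hn0
      have hco : Nat.Coprime (q0^j) m := Nat.Coprime.pow_left _ (Nat.coprime_ordCompl hq0p hn0)
      have hqjpos : 0 < q0^j := pow_pos hq0p.pos j
      have hmlt : m < n := by
        have h2le : 2 ≤ q0^j := le_trans hq0p.two_le (Nat.le_self_pow (by omega) q0)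
        calc m < q0^j * m := by nlinarith
        _ = n := hsplit
      have hze : fibEntry n = Nat.lcm (fibEntry (q0^j)) (fibEntry m) := by
        rw [← hsplit]
        exact fibEntry_mul_coprime _ _ hqjpos hmpos hco
      clear_value q0 j m
      rw [hze] at hdvd
      rcases (prime_pow_dvd_lcm hp (fibEntry_pos _ hqjpos).ne' (fibEntry_pos _ hmpos).ne').mp hdvd with hc | hc
      · refine ⟨q0, j, hq0p, hjpos, ?_, ?_⟩
        · rw [← hsplit]; exact dvd_mul_right _ _
        · obtain ⟨j', rfl⟩ : ∃ j', j = j' + 1 := ⟨j - 1, by omega⟩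
          have := fibEntry_prime_pow_dvd q0 hq0p j'
          simpa using hc.trans this
      · obtain ⟨q, j', hq, hj', hqj', hpk⟩ := IH m hmlt hmpos p k hp hk hc
        exact ⟨q, j', hq, hj', hqj'.trans ⟨q0^j, by rw [← hsplit]; ring⟩, hpk⟩

/-- Step A: if `fibEntry n = n` then all prime factors of `n` are ≤ 5. -/
lemma fixed_point_prime_factors (n : ℕ) (hn : 0 < n) (hfix : fibEntry n = n) :
    ∀ p, p.Prime → p ∣ n → p ≤ 5 := by
  by_contra hcon
  push_neg at hcon
  obtain ⟨p0, hp0, hp0n, hp05⟩ := hcon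
  have hn0 : n ≠ 0 := hn.ne'
  have hne : n.primeFactors.Nonempty := ⟨p0, Nat.mem_primeFactors.mpr ⟨hp0, hp0n, hn0⟩⟩
  set P := n.primeFactors.max' hne with hP
  have hPmem := n.primeFactors.max'_mem hne
  obtain ⟨hPp, hPn, -⟩ := Nat.mem_primeFactors.mp hPmem
  have hP7 : 7 ≤ P := by
    have := n.primeFactors.le_max' p0 (Nat.mem_primeFactors.mpr ⟨hp0, hp0n, hn0⟩)
    have := hp0.two_le
    -- p0 prime and p0 > 5 means p0 ≥ 7 (6 not prime)
    have hp06 : p0 ≠ 6 := by rintro rfl; norm_num at hp0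
    omega
  set k := n.factorization P with hk
  have hkpos : 0 < k := hPp.factorization_pos_of_dvd hn0 hPn
  have hPkn : P^k ∣ n := Nat.ordProj_dvd n P
  have hPkz : P^k ∣ fibEntry n := by rw [hfix]; exact hPkn
  obtain ⟨q, j, hq, hj, hqn, hpk⟩ := fibEntry_prime_pow_source n hn P k hPp hkpos hPkz
  have hqP : q ≤ P := n.primeFactors.le_max' q
    (Nat.mem_primeFactors.mpr ⟨hq, (dvd_pow_self q (by omega : j ≠ 0)).trans hqn, hn0⟩)
  rcases eq_or_ne q P with rfl | hne'
  · -- q = P : P^k ∣ P^(j-1) * fibEntry P, and P ∤ fibEntry P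
    have hcop : Nat.Coprime (P^k) (fibEntry P) :=
      Nat.Coprime.pow_left _ ((Nat.Prime.coprime_iff_not_dvd hPp).mpr (not_p_dvd_fibEntry P hPp hP7))
    have hdvd : P^k ∣ P^(j-1) := hcop.dvd_of_dvd_mul_right hpk
    have hkj : k ≤ j - 1 := (Nat.pow_dvd_pow_iff_le_right hPp.one_lt).mp hdvd
    have hjk : j ≤ k := (hPp.pow_dvd_iff_le_factorization hn0).mp hqn
    omega
  · -- q < P
    have hqlt : q < P := lt_of_le_of_ne hqP hne'
    have hcop : Nat.Coprime (P^k) (q^(j-1)) :=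
      Nat.Coprime.pow _ _ ((Nat.coprime_primes hPp hq).mpr (Ne.symm hne'))
    have hdvd : P^k ∣ fibEntry q := hcop.dvd_of_dvd_mul_left hpk
    have hPle : P ≤ fibEntry q := le_trans (Nat.le_self_pow hkpos.ne' P)
      (Nat.le_of_dvd (fibEntry_pos q hq.pos) hdvd)
    -- bound fibEntry q
    rcases Nat.lt_or_ge q 7 with hqs | hql
    · have hq2 : 2 ≤ q := hq.two_le
      interval_cases q
      · rw [fibEntry_two] at hPle; omega
      · rw [fibEntry_three] at hPle; omega
      · norm_num at hq
      · rw [fibEntry_five] at hPle; omega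
      · norm_num at hq
    · have hzq := fibEntry_prime_le q hq hql
      have hzqle : fibEntry q ≤ q + 1 := by
        rcases hzq with h | h
        · have := Nat.le_of_dvd (by omega) h; omega
        · exact Nat.le_of_dvd (by omega) h
      -- P ≤ fibEntry q ≤ q+1 ≤ P so fibEntry q = q+1 = P... then P even, contradiction
      have hq1 : q + 1 = P := by omega
      have hqodd : q % 2 = 1 := Nat.odd_iff.mp (hq.odd_of_ne_two (by omega))
      have hPodd : P % 2 = 1 := Nat.odd_iff.mp (hPp.odd_of_ne_two (by omega))
      omega

end Main

section Final

lemma fibEntry_twelve : fibEntry 12 = 12 := by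
  have h : (12:ℕ) = 4 * 3 := by norm_num
  rw [h, fibEntry_mul_coprime 4 3 (by norm_num) (by norm_num) (by decide),
    fibEntry_four, fibEntry_three]
  decide

lemma fibEntry_mul_five_pow (x c : ℕ) (hx : 0 < x) (hco : Nat.Coprime x 5) :
    fibEntry (x * 5^c) = Nat.lcm (fibEntry x) (5^c) := by
  rw [fibEntry_mul_coprime x (5^c) hx (by positivity) (hco.pow_right c),
    (fibEntry_five_pow c).1]

theorem fibEntry_fixed_points (n : ℕ) (hn : 0 < n) :
    fibEntry n = n ↔ ∃ f : ℕ, n = 5 ^ f ∨ n = 12 * 5 ^ f := by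
  constructor
  · intro hfix
    have hple := fixed_point_prime_factors n hn hfix
    have hn0 : n ≠ 0 := hn.ne'
    set a := n.factorization 2 with ha
    set b := n.factorization 3 with hb
    set c := n.factorization 5 with hc
    have hsub : n.primeFactors ⊆ ({2,3,5} : Finset ℕ) := by
      intro p hp
      obtain ⟨hpp, hpd, -⟩ := Nat.mem_primeFactors.mp hp
      have h5 := hple p hpp hpd
      have h2 := hpp.two_le
      have : p = 2 ∨ p = 3 ∨ p = 5 := by
        interval_cases p
        · exact Or.inl rfl
        · exact Or.inr (Or.inl rfl)
        · exact absurd hpp (by norm_num)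
        · exact Or.inr (Or.inr rfl)
      simpa using this
    have h1 := Nat.factorization_prod_pow_eq_self hn0
    have h2 : (n.factorization.prod fun p e => p ^ e)
        = ∏ p ∈ n.primeFactors, p ^ n.factorization p := by
      rw [← Nat.support_factorization]; rfl
    have h3 : ∏ p ∈ n.primeFactors, p ^ n.factorization p
        = ∏ p ∈ ({2,3,5} : Finset ℕ), p ^ n.factorization p := by
      refine Finset.prod_subset hsub ?_
      intro x _ hnx
      rw [← Nat.support_factorization] at hnx
      rw [Finsupp.notMem_support_iff.mp hnx, pow_zero]
    have hfact : n = 2^a * (3^b * 5^c) := by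
      conv_lhs => rw [← h1]
      rw [h2, h3, Finset.prod_insert (by decide), Finset.prod_insert (by decide),
        Finset.prod_singleton]
    have hco35 : Nat.Coprime (3^b) (5^c) := Nat.Coprime.pow b c (by decide)
    have hco2 : Nat.Coprime (2^a) (3^b * 5^c) :=
      Nat.Coprime.mul_right (Nat.Coprime.pow a b (by decide)) (Nat.Coprime.pow a c (by decide))
    have hp2 : (0:ℕ) < 2^a := by positivity
    have hp3 : (0:ℕ) < 3^b := by positivity
    have hp5 : (0:ℕ) < 5^c := by positivity
    have hz5 : fibEntry (5^c) = 5^c := (fibEntry_five_pow c).1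
    have hzn : fibEntry n = Nat.lcm (fibEntry (2^a)) (Nat.lcm (fibEntry (3^b)) (fibEntry (5^c))) := by
      rw [hfact, fibEntry_mul_coprime _ _ hp2 (by positivity) hco2,
        fibEntry_mul_coprime _ _ hp3 hp5 hco35]
    have hz2b : fibEntry (2^a) ∣ 3 * 2^(a-1) := by
      rcases Nat.eq_zero_or_pos a with h | hap
      · rw [h]; simpa [fibEntry_one] using one_dvd _
      · obtain ⟨a', ha'⟩ : ∃ a', a = a' + 1 := ⟨a - 1, by omega⟩
        rw [ha']
        have := fibEntry_prime_pow_dvd 2 (by norm_num) a'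
        rw [fibEntry_two] at this
        simpa [Nat.mul_comm, Nat.add_sub_cancel] using this
    have hz3b : fibEntry (3^b) ∣ 4 * 3^(b-1) := by
      rcases Nat.eq_zero_or_pos b with h | hbp
      · rw [h]; simpa [fibEntry_one] using one_dvd _
      · obtain ⟨b', hb'⟩ : ∃ b', b = b' + 1 := ⟨b - 1, by omega⟩
        rw [hb']
        have := fibEntry_prime_pow_dvd 3 (by norm_num) b'
        rw [fibEntry_three] at this
        simpa [Nat.mul_comm, Nat.add_sub_cancel] using this
    have hnL : n ∣ Nat.lcm (3*2^(a-1)) (Nat.lcm (4*3^(b-1)) (5^c)) := by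
      conv_lhs => rw [← hfix]
      rw [hzn]
      refine Nat.lcm_dvd (hz2b.trans (Nat.dvd_lcm_left _ _)) (Nat.lcm_dvd ?_ ?_)
      · exact dvd_trans hz3b ((Nat.dvd_lcm_left _ _).trans (Nat.dvd_lcm_right _ _))
      · rw [hz5]
        exact (Nat.dvd_lcm_right _ _).trans (Nat.dvd_lcm_right _ _)
    have hL1 : (3*2^(a-1) : ℕ) ≠ 0 := by positivity
    have hL2 : (4*3^(b-1) : ℕ) ≠ 0 := by positivity
    have hL5 : ((5:ℕ)^c) ≠ 0 := by positivity
    have ha2 : a ≤ 2 := by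
      have h2a : (2:ℕ)^a ∣ n := Nat.ordProj_dvd n 2
      have hdL := h2a.trans hnL
      rcases (prime_pow_dvd_lcm Nat.prime_two hL1 (Nat.lcm_ne_zero hL2 hL5)).mp hdL with h | h
      · have hcop : Nat.Coprime (2^a) 3 := Nat.Coprime.pow_left _ (by decide)
        have hd := hcop.dvd_of_dvd_mul_left h
        have := (Nat.pow_dvd_pow_iff_le_right (by norm_num : (1:ℕ) < 2)).mp hd
        omega
      · rcases (prime_pow_dvd_lcm Nat.prime_two hL2 hL5).mp h with h' | h'
        · have hcop : Nat.Coprime (2^a) (3^(b-1)) := Nat.Coprime.pow a _ (by decide)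
          have h4 : (2:ℕ)^a ∣ 4 := hcop.dvd_of_dvd_mul_right h'
          have h4' : (2:ℕ)^a ∣ 2^2 := by norm_num at h4 ⊢; exact h4
          exact (Nat.pow_dvd_pow_iff_le_right (by norm_num : (1:ℕ) < 2)).mp h4'
        · have hcop : Nat.Coprime (2^a) (5^c) := Nat.Coprime.pow a c (by decide)
          have h1' : (2:ℕ)^a = 1 := hcop.eq_one_of_dvd h'
          have : a = 0 := by
            by_contra hne
            have := Nat.le_self_pow hne 2
            omega
          omega
    have hb1 : b ≤ 1 := by
      have h3b : (3:ℕ)^b ∣ n := Nat.ordProj_dvd n 3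
      have hdL := h3b.trans hnL
      rcases (prime_pow_dvd_lcm Nat.prime_three hL1 (Nat.lcm_ne_zero hL2 hL5)).mp hdL with h | h
      · have hcop : Nat.Coprime (3^b) (2^(a-1)) := Nat.Coprime.pow b _ (by decide)
        have h3 : (3:ℕ)^b ∣ 3 := hcop.dvd_of_dvd_mul_right h
        have h3' : (3:ℕ)^b ∣ 3^1 := by simpa using h3
        exact (Nat.pow_dvd_pow_iff_le_right (by norm_num : (1:ℕ) < 3)).mp h3'
      · rcases (prime_pow_dvd_lcm Nat.prime_three hL2 hL5).mp h with h' | h'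
        · have hcop : Nat.Coprime (3^b) 4 := Nat.Coprime.pow_left _ (by decide)
          have hd := hcop.dvd_of_dvd_mul_left h'
          have := (Nat.pow_dvd_pow_iff_le_right (by norm_num : (1:ℕ) < 3)).mp hd
          omega
        · have hcop : Nat.Coprime (3^b) (5^c) := Nat.Coprime.pow b c (by decide)
          have h1' : (3:ℕ)^b = 1 := hcop.eq_one_of_dvd h'
          have : b = 0 := by
            by_contra hne
            have := Nat.le_self_pow hne 3
            omega
          omega
    -- now case analysis
    clear_value a b c
    have hfix' : fibEntry n = n := hfix
    interval_cases a <;> interval_cases b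
    · -- n = 5^c
      exact ⟨c, Or.inl (by simpa using hfact)⟩
    · -- n = 3*5^c : contradiction
      exfalso
      have hn3 : n = 3 * 5^c := by rw [hfact]; ring
      have : fibEntry n = 4 * 5^c := by
        rw [hn3, fibEntry_mul_five_pow 3 c (by norm_num) (by decide), fibEntry_three,
          Nat.Coprime.lcm_eq_mul (Nat.Coprime.pow_right c (by decide))]
      rw [hfix, hn3] at this
      have := Nat.eq_of_mul_eq_mul_right hp5 this
      omega
    · -- n = 2*5^c : contradiction
      exfalso
      have hn2 : n = 2 * 5^c := by rw [hfact]; ring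
      have : fibEntry n = 3 * 5^c := by
        rw [hn2, fibEntry_mul_five_pow 2 c (by norm_num) (by decide), fibEntry_two,
          Nat.Coprime.lcm_eq_mul (Nat.Coprime.pow_right c (by decide))]
      rw [hfix, hn2] at this
      have := Nat.eq_of_mul_eq_mul_right hp5 this
      omega
    · -- n = 6*5^c : contradiction
      exfalso
      have hn6 : n = 2 * (3 * 5^c) := by rw [hfact]; ring
      have hz35 : fibEntry (3 * 5^c) = 4 * 5^c := by
        rw [fibEntry_mul_five_pow 3 c (by norm_num) (by decide), fibEntry_three,
          Nat.Coprime.lcm_eq_mul (Nat.Coprime.pow_right c (by decide))]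
      have hco6 : Nat.Coprime 2 (3 * 5^c) :=
        Nat.Coprime.mul_right (by decide) (Nat.Coprime.pow_right c (by decide))
      have : fibEntry n = 12 * 5^c := by
        rw [hn6, fibEntry_mul_coprime 2 (3*5^c) (by norm_num) (by positivity) hco6,
          fibEntry_two, hz35,
          Nat.Coprime.lcm_eq_mul (Nat.Coprime.mul_right (by decide) (Nat.Coprime.pow_right c (by decide)))]
        ring
      rw [hfix, hn6] at this
      have h6 : 6 * 5^c = 12 * 5^c := by linarith [this]
      have := Nat.eq_of_mul_eq_mul_right hp5 h6
      omega
    · -- n = 4*5^c : contradiction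
      exfalso
      have hn4 : n = 4 * 5^c := by rw [hfact]; ring
      have : fibEntry n = 6 * 5^c := by
        rw [hn4, fibEntry_mul_five_pow 4 c (by norm_num) (by decide), fibEntry_four,
          Nat.Coprime.lcm_eq_mul (Nat.Coprime.pow_right c (by decide))]
      rw [hfix, hn4] at this
      have := Nat.eq_of_mul_eq_mul_right hp5 this
      omega
    · -- n = 12*5^c
      exact ⟨c, Or.inr (by rw [hfact]; ring)⟩
  · rintro ⟨f, rfl | rfl⟩
    · exact (fibEntry_five_pow f).1
    · have hco : Nat.Coprime 12 (5^f) := Nat.Coprime.pow_right _ (by decide)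
      rw [fibEntry_mul_coprime 12 (5^f) (by norm_num) (by positivity) hco,
        fibEntry_twelve, (fibEntry_five_pow f).1, hco.lcm_eq_mul]

end Final
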